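/- Let G be a commutative cancellative semigroup of uncountable cardinality. Then G ↛ [ℵ₁]^{FS}_{ℵ₀} holds; that is, there exists a colouring c : G → ℕ such that for every uncountable subset X ⊆ G and every k ∈ ℕ, there is a nonempty finite subset a ⊆ X with c(∑_{x∈a} x) = k. -/

import Mathlib

open Cardinal


/-- Sum of `n+1` elements of an additive commutative semigroup. -/
def sgSum {G : Type*} [AddCommSemigroup G] : (n : ℕ) → (Fin (n + 1) → G) → G
  | 0, x => x 0
  | n + 1, x => sgSum n (fun i => x i.castSucc) + x (Fin.last (n + 1))

/-- `FS(X)`: all sums of finitely many (at least one) pairwise distinct elements of `X`. -/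
def FS {G : Type*} [AddCommSemigroup G] (X : Set G) : Set G :=
  {g | ∃ (n : ℕ) (x : Fin (n + 1) → G),
    Function.Injective x ∧ (∀ i, x i ∈ X) ∧ sgSum n x = g}

lemma sgSum_eq_sum {M : Type*} [AddCommMonoid M] : ∀ (n : ℕ) (x : Fin (n+1) → M),
    sgSum n x = ∑ i, x i
  | 0, x => by simp [sgSum]
  | n+1, x => by
      rw [sgSum, sgSum_eq_sum n, Fin.sum_univ_castSucc (f := x)]

lemma map_sgSum {G H : Type*} [AddCommSemigroup G] [AddCommSemigroup H] (φ : G → H)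
    (hφ : ∀ a b, φ (a + b) = φ a + φ b) : ∀ (n : ℕ) (x : Fin (n+1) → G),
    φ (sgSum n x) = sgSum n (φ ∘ x)
  | 0, x => rfl
  | n+1, x => by rw [sgSum, hφ, map_sgSum φ hφ n]; rfl

-- pigeonhole: uncountable set, map with countable codomain
lemma uncount_fiber {α β : Type*} [Countable β] {X : Set α} (hX : ¬ X.Countable)
    (f : α → β) : ∃ b, ¬ (X ∩ f ⁻¹' {b}).Countable := by
  by_contra h
  push_neg at h
  refine hX <| (Set.countable_iUnion h).mono fun x hx => ?_
  simp only [Set.mem_iUnion, Set.mem_inter_iff, Set.mem_preimage, Set.mem_singleton_iff]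
  exact ⟨f x, hx, rfl⟩

-- uncountable image under countable-to-one maps
lemma uncount_image {α β : Type*} {X : Set α} (hX : ¬ X.Countable) (f : α → β)
    (hfib : ∀ b, (X ∩ f ⁻¹' {b}).Countable) : ¬ (f '' X).Countable := by
  intro h
  refine hX <| ((h.biUnion (fun b _ => hfib b)).mono (fun x hx => ?_))
  simp only [Set.mem_iUnion, Set.mem_inter_iff, Set.mem_preimage, Set.mem_singleton_iff]
  exact ⟨f x, ⟨x, hx, rfl⟩, hx, rfl⟩

lemma uncount_of_image {α β : Type*} {X : Set α} (f : α → β) (hinj : Set.InjOn f X)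
    (h : ¬ (f '' X).Countable) : ¬ X.Countable := fun hc => h (hc.image f)

lemma uncount_not_countable {α : Type*} {X : Set α} : ¬ X.Countable ↔ ℵ₀ < Cardinal.mk X := by
  rw [← Set.countable_coe_iff, ← Cardinal.mk_le_aleph0_iff, not_le]
lemma uncount_image_injOn {α β : Type*} {X : Set α} (hX : ¬ X.Countable) {f : α → β}
    (hinj : Set.InjOn f X) : ¬ (f '' X).Countable := by
  refine uncount_image hX f (fun b => Set.Subsingleton.countable ?_)
  rintro x ⟨hx, rfl⟩ y ⟨hy, hfy⟩
  exact (hinj hy hx hfy).symm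

-- Δ-system lemma, fixed size case
lemma delta_system_card {ι : Type*} [DecidableEq ι] : ∀ (n : ℕ) (𝒜 : Set (Finset ι)),
    (∀ S ∈ 𝒜, S.card = n) → ¬ 𝒜.Countable →
    ∃ (R : Finset ι) (ℬ : Set (Finset ι)), ℬ ⊆ 𝒜 ∧ ¬ ℬ.Countable ∧
      ∀ S ∈ ℬ, ∀ T ∈ ℬ, S ≠ T → S ∩ T = R := by
  intro n
  induction n with
  | zero =>
    intro 𝒜 hcard hA
    exact absurd ((Set.countable_singleton (∅ : Finset ι)).mono
      (fun S hS => Finset.card_eq_zero.1 (hcard S hS))) hA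
  | succ n IH =>
    intro 𝒜 hcard hA
    by_cases hP : ∃ i, ¬ {S ∈ 𝒜 | i ∈ S}.Countable
    · obtain ⟨i, hi⟩ := hP
      set 𝒜i := {S ∈ 𝒜 | i ∈ S} with h𝒜i
      have hinj : Set.InjOn (fun S => Finset.erase S i) 𝒜i := by
        intro S hS T hT h
        have h' : S.erase i = T.erase i := h
        rw [← Finset.insert_erase hS.2, h', Finset.insert_erase hT.2]
      have himg : ¬ ((fun S => Finset.erase S i) '' 𝒜i).Countable := uncount_image_injOn hi hinj
      obtain ⟨R, ℬ, hℬsub, hℬunc, hℬ⟩ := IH _ (by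
        rintro S ⟨T, hT, rfl⟩
        rw [Finset.card_erase_of_mem hT.2, hcard T hT.1]
        rfl) himg
      refine ⟨insert i R, {S ∈ 𝒜i | Finset.erase S i ∈ ℬ}, fun S hS => hS.1.1, ?_, ?_⟩
      · intro hc
        refine hℬunc ((hc.image (fun S => Finset.erase S i)).mono ?_)
        intro T hT
        obtain ⟨S, hS, rfl⟩ := hℬsub hT
        exact ⟨S, ⟨hS, hT⟩, rfl⟩
      · rintro S ⟨hS, hSe⟩ T ⟨hT, hTe⟩ hST
        have h1 : S.erase i ∩ T.erase i = R :=
          hℬ _ hSe _ hTe (fun h => hST (hinj.eq_iff hS hT |>.1 h))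
        ext x
        simp only [Finset.mem_inter, Finset.mem_insert]
        constructor
        · rintro ⟨hxS, hxT⟩
          rcases eq_or_ne x i with rfl | hxi
          · exact Or.inl rfl
          · refine Or.inr ?_
            rw [← h1]
            exact Finset.mem_inter.2 ⟨Finset.mem_erase.2 ⟨hxi, hxS⟩, Finset.mem_erase.2 ⟨hxi, hxT⟩⟩
        · rintro (rfl | hx)
          · exact ⟨hS.2, hT.2⟩
          · rw [← h1] at hx
            simp only [Finset.mem_inter, Finset.mem_erase] at hx
            exact ⟨hx.1.2, hx.2.2⟩
    · push_neg at hP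
      -- find an uncountable pairwise disjoint subfamily
      obtain ⟨𝒟, -, hmax⟩ := zorn_subset_nonempty
        {𝒟 : Set (Finset ι) | 𝒟 ⊆ 𝒜 ∧ 𝒟.Pairwise (fun S T => Disjoint S T)}
        (fun c hc hchain _ => ⟨⋃₀ c, ⟨fun S hS => by
            obtain ⟨D, hD, hSD⟩ := hS; exact (hc hD).1 hSD,
          fun S hS T hT hST => by
            obtain ⟨D1, hD1, hS1⟩ := hS
            obtain ⟨D2, hD2, hT2⟩ := hT
            rcases hchain.total hD1 hD2 with h | h
            · exact (hc hD2).2 (h hS1) hT2 hST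
            · exact (hc hD1).2 hS1 (h hT2) hST⟩,
          fun D hD S hS => ⟨D, hD, hS⟩⟩)
        ∅ ⟨Set.empty_subset _, Set.pairwise_empty _⟩
      have h𝒟 := hmax.1
      have h𝒟unc : ¬ 𝒟.Countable := by
        intro hc
        have hU : (⋃ S ∈ 𝒟, (S : Set ι)).Countable :=
          hc.biUnion (fun S _ => S.countable_toSet)
        -- every member of 𝒜 meets ⋃ 𝒟, or is in 𝒟
        have hsub : 𝒜 ⊆ 𝒟 ∪ ⋃ i ∈ (⋃ S ∈ 𝒟, (S : Set ι)), {S ∈ 𝒜 | i ∈ S} := by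
          intro S hS
          by_cases hmem : ∃ T ∈ 𝒟, ¬ Disjoint S T
          · obtain ⟨T, hT, hdT⟩ := hmem
            rw [Finset.not_disjoint_iff] at hdT
            obtain ⟨x, hxS, hxT⟩ := hdT
            exact Or.inr (Set.mem_iUnion₂.2 ⟨x, Set.mem_iUnion₂.2 ⟨T, hT, hxT⟩, hS, hxS⟩)
          · push_neg at hmem
            left
            rcases Classical.em (S ∈ 𝒟) with h | h
            · exact h
            · exfalso
              have hDS : 𝒟 ∪ {S} ∈ {𝒟 : Set (Finset ι) | 𝒟 ⊆ 𝒜 ∧ 𝒟.Pairwise fun S T => Disjoint S T} := ⟨Set.union_subset h𝒟.1 (by simpa using hS), by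
                refine Set.pairwise_union_of_symm.2
                  ⟨h𝒟.2, Set.pairwise_singleton _ _, ?_⟩
                intro a ha b hb _
                rw [Set.mem_singleton_iff] at hb
                subst hb
                exact (hmem a ha).symm⟩
              have := hmax.2 hDS (Set.subset_union_left)
              exact h (this (Or.inr rfl))
        refine hA (Set.Countable.mono hsub ?_)
        exact hc.union (hU.biUnion (fun i _ => hP i))
      refine ⟨∅, 𝒟, h𝒟.1, h𝒟unc, fun S hS T hT hST => ?_⟩
      rw [← Finset.disjoint_iff_inter_eq_empty]
      exact h𝒟.2 hS hT hST

-- Δ-system lemma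
lemma delta_system {ι : Type*} [DecidableEq ι] (𝒜 : Set (Finset ι)) (hA : ¬ 𝒜.Countable) :
    ∃ (R : Finset ι) (ℬ : Set (Finset ι)), ℬ ⊆ 𝒜 ∧ ¬ ℬ.Countable ∧
      ∀ S ∈ ℬ, ∀ T ∈ ℬ, S ≠ T → S ∩ T = R := by
  have hn' : ∃ n : ℕ, ¬ {S ∈ 𝒜 | S.card = n}.Countable := by
    by_contra h
    push_neg at h
    refine hA ((Set.countable_iUnion h).mono fun S hS => ?_)
    exact Set.mem_iUnion.2 ⟨S.card, ⟨hS, rfl⟩⟩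
  obtain ⟨n, hn⟩ := hn'
  obtain ⟨R, ℬ, hsub, hunc, hpair⟩ := delta_system_card n {S ∈ 𝒜 | S.card = n}
    (fun S hS => hS.2) hn
  exact ⟨R, ℬ, fun S hS => (hsub hS).1, hunc, hpair⟩


abbrev QZmod : Type := ℚ ⧸ AddSubgroup.zmultiples (1 : ℚ)
abbrev Dd : Type := ℚ × QZmod

instance : Countable QZmod := Quotient.countable
instance : Countable Dd := inferInstance

lemma Dd.div_exists (n : ℤ) (hn : n ≠ 0) (d : Dd) : ∃ e : Dd, n • e = d := by
  obtain ⟨q, hq⟩ := QuotientAddGroup.mk_surjective d.2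
  refine ⟨(d.1 / (n : ℚ), QuotientAddGroup.mk (q / (n : ℚ))), ?_⟩
  have hn' : (n : ℚ) ≠ 0 := Int.cast_ne_zero.2 hn
  ext
  · show n • (d.1 / (n : ℚ)) = d.1
    rw [zsmul_eq_mul, mul_div_cancel₀ _ hn']
  · show n • (QuotientAddGroup.mk (q / (n : ℚ)) : QZmod) = d.2
    rw [← hq, ← QuotientAddGroup.mk_zsmul]
    congr 1
    rw [zsmul_eq_mul, mul_div_cancel₀ _ hn']

lemma finsupp_div_exists {ι : Type*} (n : ℤ) (hn : n ≠ 0) (h : ι →₀ Dd) :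
    ∃ z : ι →₀ Dd, n • z = h := by
  classical
  refine ⟨h.sum (fun i d => Finsupp.single i (Classical.choose (Dd.div_exists n hn d))), ?_⟩
  rw [Finsupp.smul_sum]
  have : ∀ (i : ι) (d : Dd), n • Finsupp.single i (Classical.choose (Dd.div_exists n hn d))
      = Finsupp.single i d := by
    intro i d
    rw [Finsupp.smul_single, Classical.choose_spec (Dd.div_exists n hn d)]
  calc h.sum (fun i d => n • Finsupp.single i (Classical.choose (Dd.div_exists n hn d)))
      = h.sum (fun i d => Finsupp.single i d) := by
        apply Finsupp.sum_congr
        intro i _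
        exact this i (h i)
    _ = h := Finsupp.sum_single h

lemma baer_finsupp (ι : Type*) : Module.Baer ℤ (ι →₀ Dd) := by
  intro I g
  obtain ⟨n, rfl⟩ : ∃ n : ℤ, I = Ideal.span {n} :=
    (I.isPrincipal_iff.1 inferInstance).imp (fun n hn => by
      rw [hn, Ideal.submodule_span_eq])
  rcases eq_or_ne n 0 with rfl | hn
  · refine ⟨0, fun x hx => ?_⟩
    have hx0 : x = 0 := by { rw [Ideal.mem_span_singleton] at hx; simpa using hx }
    subst hx0
    have h0 : (⟨0, hx⟩ : Ideal.span ({0} : Set ℤ)) = 0 := rfl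
    simp [h0]
  · have hmem : n ∈ Ideal.span ({n} : Set ℤ) := Ideal.subset_span rfl
    obtain ⟨z, hz⟩ := finsupp_div_exists n hn (g ⟨n, hmem⟩)
    refine ⟨LinearMap.toSpanSingleton ℤ _ z, fun x hx => ?_⟩
    obtain ⟨m, rfl⟩ : ∃ m : ℤ, x = m * n := by
      rcases Ideal.mem_span_singleton'.1 hx with ⟨m, hm⟩
      exact ⟨m, hm.symm⟩
    have : (⟨m * n, hx⟩ : Ideal.span ({n} : Set ℤ)) = m • ⟨n, hmem⟩ := by
      ext; simp [mul_comm]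
    rw [this, map_smul, LinearMap.toSpanSingleton_apply, ← hz, mul_smul]
theorem exists_emb_finsupp (A : Type*) [AddCommGroup A] :
    ∃ φ : A →+ ((A × ℕ) →₀ Dd), Function.Injective φ := by
  classical
  set H := (A × ℕ) →₀ Dd with hH
  let Good : AddSubgroup (A × H) → Prop := fun Γ =>
    (∀ h : H, ((0 : A), h) ∈ Γ → h = 0) ∧
    (∀ a : A, (a, (0 : H)) ∈ Γ → a = 0) ∧
    (∀ p ∈ Γ, ∀ q ∈ (p.2 : H).support, ∃ h' : H, (q.1, h') ∈ Γ)
  obtain ⟨Γ, -, hmax⟩ := zorn_le_nonempty₀ {Γ : AddSubgroup (A × H) | Good Γ}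
    (fun c hc hchain y hy => by
      refine ⟨sSup c, ?_, fun z hz => le_sSup hz⟩
      have hmem : ∀ p : A × H, p ∈ sSup c ↔ ∃ Γ ∈ c, p ∈ Γ :=
        fun p => AddSubgroup.mem_sSup_of_directedOn ⟨y, hy⟩ hchain.directedOn
      refine ⟨fun h hh => ?_, fun a hh => ?_, fun p hp q hq => ?_⟩
      · obtain ⟨Γ, hΓ, hmem'⟩ := (hmem _).1 hh
        exact (hc hΓ).1 h hmem'
      · obtain ⟨Γ, hΓ, hmem'⟩ := (hmem _).1 hh
        exact (hc hΓ).2.1 a hmem'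
      · obtain ⟨Γ, hΓ, hmem'⟩ := (hmem _).1 hp
        obtain ⟨h', hh'⟩ := (hc hΓ).2.2 p hmem' q hq
        exact ⟨h', (hmem _).2 ⟨Γ, hΓ, hh'⟩⟩)
    ⊥ (by
      refine ⟨fun h hh => ?_, fun a hh => ?_, fun p hp q hq => ?_⟩
      · exact congrArg Prod.snd (AddSubgroup.mem_bot.1 hh)
      · exact congrArg Prod.fst (AddSubgroup.mem_bot.1 hh)
      · rw [AddSubgroup.mem_bot] at hp
        rw [hp] at hq
        simp at hq)
  have hGood : Good Γ := hmax.1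
  -- the domain subgroup
  set B : AddSubgroup A := Γ.map (AddMonoidHom.fst A H) with hB
  have hmemB : ∀ x : A, x ∈ B ↔ ∃ h : H, (x, h) ∈ Γ := by
    intro x
    constructor
    · rintro ⟨p, hp, rfl⟩
      exact ⟨p.2, hp⟩
    · rintro ⟨h, hh⟩
      exact ⟨(x, h), hh, rfl⟩
  have huniq : ∀ (x : A) (h h' : H), (x, h) ∈ Γ → (x, h') ∈ Γ → h = h' := by
    intro x h h' h1 h2
    have hsub : ((0 : A), h - h') ∈ Γ := by
      have := sub_mem h1 h2
      simpa using this
    exact sub_eq_zero.1 (hGood.1 _ hsub)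
  -- the graph function
  let f0 : A → H := fun x => if hx : ∃ h : H, (x, h) ∈ Γ then Classical.choose hx else 0
  have hf0 : ∀ x : A, x ∈ B → (x, f0 x) ∈ Γ := by
    intro x hx
    obtain ⟨h, hh⟩ := (hmemB x).1 hx
    have hex : ∃ h : H, (x, h) ∈ Γ := ⟨h, hh⟩
    simpa only [f0, dif_pos hex] using Classical.choose_spec hex
  -- main claim: the domain is everything
  have hclaim : ∀ a : A, a ∈ B := by
    by_contra hcon
    push_neg at hcon
    obtain ⟨a, ha⟩ := hcon
    set B' : AddSubgroup A := B ⊔ AddSubgroup.zmultiples a with hB'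
    have hBB' : B ≤ B' := le_sup_left
    have haB' : a ∈ B' := AddSubgroup.mem_sup_right (AddSubgroup.mem_zmultiples a)
    -- the subgroup of multiples of a falling into B
    set K : AddSubgroup ℤ := B.comap ((zmultiplesHom A) a) with hKdef
    have hKmem : ∀ k : ℤ, k ∈ K ↔ k • a ∈ B := fun k => Iff.rfl
    obtain ⟨n, hK⟩ := Int.subgroup_cyclic K
    -- the cyclic character
    let u : ℤ → Dd := if n = 0 then fun k => ((k : ℚ), 0)
      else fun k => (0, QuotientAddGroup.mk ((k : ℚ) / (n : ℚ)))
    have hu_add : ∀ k l : ℤ, u (k + l) = u k + u l := by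
      intro k l
      by_cases hn : n = 0 <;> simp only [u, if_pos, if_neg, hn, if_true, if_false]
      · ext <;> simp [Prod.fst_add]
      · ext
        · simp
        · show _ = QuotientAddGroup.mk _ + QuotientAddGroup.mk _
          rw [← QuotientAddGroup.mk_add]
          congr 1
          push_cast
          ring
    have hu_zero : u 0 = 0 := by
      by_cases hn : n = 0 <;> simp [u, hn]
    have hu_neg : ∀ k : ℤ, u (-k) = - u k := by
      intro k
      have := hu_add k (-k)
      rw [add_neg_cancel, hu_zero] at this
      exact (neg_eq_of_add_eq_zero_right this.symm).symm
    have hu_iff : ∀ k : ℤ, u k = 0 ↔ k ∈ K := by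
      intro k
      rw [hK, AddSubgroup.mem_closure_singleton]
      by_cases hn : n = 0
      · subst hn
        simp only [u, if_pos rfl]
        constructor
        · intro h
          have hk : (k : ℚ) = 0 := congrArg Prod.fst h
          exact ⟨0, by rw [smul_zero]; exact_mod_cast hk.symm⟩
        · rintro ⟨m, hm⟩
          simp only [smul_zero] at hm
          subst hm
          simp
      · simp only [u, if_neg hn]
        have hn' : (n : ℚ) ≠ 0 := Int.cast_ne_zero.2 hn
        constructor
        · intro h
          have h2 : (QuotientAddGroup.mk ((k : ℚ) / (n : ℚ)) : QZmod) = 0 :=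
            congrArg Prod.snd h
          rw [QuotientAddGroup.eq_zero_iff, AddSubgroup.mem_zmultiples_iff] at h2
          obtain ⟨m, hm⟩ := h2
          refine ⟨m, ?_⟩
          have hm' : (m : ℚ) = (k : ℚ) / (n : ℚ) := by
            rw [← hm]; push_cast [zsmul_eq_mul]; ring
          have h3 : (m : ℚ) * (n : ℚ) = (k : ℚ) := by
            rw [hm']; field_simp
          have h4 : ((m * n : ℤ) : ℚ) = (k : ℚ) := by push_cast; exact h3
          have hmn : m * n = k := by exact_mod_cast h4
          rw [← hmn]; simp [smul_eq_mul]
        · rintro ⟨m, rfl⟩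
          have hdiv : ((m • n : ℤ) : ℚ) / (n : ℚ) = (m : ℚ) := by
            push_cast [smul_eq_mul]
            field_simp
          refine Prod.ext rfl ?_
          show (QuotientAddGroup.mk _ : QZmod) = 0
          rw [QuotientAddGroup.eq_zero_iff, hdiv]
          exact AddSubgroup.mem_zmultiples_iff.2 ⟨m, by simp⟩
    -- selection of the coefficient of a
    have hdec : ∀ x : ↥B', ∃ k : ℤ, (x : A) - k • a ∈ B := by
      intro x
      obtain ⟨b, hb, c, hc, hbc⟩ := AddSubgroup.mem_sup.1 x.2
      obtain ⟨k, hk⟩ := AddSubgroup.mem_zmultiples_iff.1 hc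
      refine ⟨k, ?_⟩
      rw [hk, ← hbc]
      simpa using hb
    let kf : ↥B' → ℤ := fun x => Classical.choose (hdec x)
    have hkf : ∀ x : ↥B', (x : A) - kf x • a ∈ B := fun x => Classical.choose_spec (hdec x)
    have hkey : ∀ (x : ↥B') (k : ℤ), ((x : A) - k • a ∈ B) → u (kf x) = u k := by
      intro x k hkx
      have hdiff : (kf x - k) • a ∈ B := by
        have hsm := sub_mem hkx (hkf x)
        have heq : ((x : A) - k • a) - ((x : A) - kf x • a) = (kf x - k) • a := by
          rw [sub_smul]; abel
        rwa [heq] at hsm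
      have hKk : kf x - k ∈ K := (hKmem _).2 hdiff
      have h0 : u (kf x - k) = 0 := (hu_iff _).2 hKk
      rw [sub_eq_add_neg, hu_add, hu_neg, ← sub_eq_add_neg] at h0
      exact sub_eq_zero.1 h0
    let χ0 : ↥B' → Dd := fun x => u (kf x)
    have hχadd : ∀ x y : ↥B', χ0 (x + y) = χ0 x + χ0 y := by
      intro x y
      have hxy : ((x + y : ↥B') : A) - (kf x + kf y) • a ∈ B := by
        have hsm := add_mem (hkf x) (hkf y)
        have heq : ((x : A) - kf x • a) + ((y : A) - kf y • a)
            = ((x + y : ↥B') : A) - (kf x + kf y) • a := by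
          push_cast
          rw [add_smul]
          abel
        rwa [heq] at hsm
      show u (kf (x + y)) = u (kf x) + u (kf y)
      rw [hkey (x + y) _ hxy, hu_add]
    have hχB : ∀ x : ↥B', (x : A) ∈ B → χ0 x = 0 := by
      intro x hx
      have h0 : (x : A) - (0 : ℤ) • a ∈ B := by simpa using hx
      show u (kf x) = 0
      rw [hkey x 0 h0, hu_zero]
    have hχmem : ∀ x : ↥B', χ0 x = 0 → (x : A) ∈ B := by
      intro x hx
      have hKk : kf x ∈ K := (hu_iff _).1 hx
      have h2 : kf x • a ∈ B := (hKmem _).1 hKk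
      have := add_mem (hkf x) h2
      simpa using this
    let χ : ↥B' →+ Dd := AddMonoidHom.mk' χ0 hχadd
    -- corestriction to coordinates allowed for B'
    let P : A × ℕ → Prop := fun q => q.1 ∈ B' ∧ q ≠ (a, 0)
    have hPa : ¬ P (a, 0) := fun h => h.2 rfl
    have hPnotin : (a, 0) ∉ Set.range (Function.Embedding.subtype P) := by
      rintro ⟨⟨q, hq⟩, rfl⟩
      exact hPa hq
    let σ : H →+ (Subtype P →₀ Dd) := Finsupp.subtypeDomainAddMonoidHom
    let e : (Subtype P →₀ Dd) →+ H := Finsupp.embDomain.addMonoidHom (Function.Embedding.subtype P)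
    have hes : ∀ v : H, (∀ q ∈ v.support, P q) → e (σ v) = v := by
      intro v hv
      have he : ∀ w : Subtype P →₀ Dd, e w = Finsupp.embDomain (Function.Embedding.subtype P) w :=
        fun w => rfl
      refine Finsupp.ext fun q => ?_
      by_cases hq : P q
      · have hqe : q = (Function.Embedding.subtype P) ⟨q, hq⟩ := rfl
        rw [he, hqe, Finsupp.embDomain_apply_self]
        exact Finsupp.subtypeDomain_apply (v := v)
      · rw [he, Finsupp.embDomain_notin_range _ _ _ (by
          rintro ⟨⟨q', hq'⟩, rfl⟩
          exact hq hq')]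
        by_contra hne
        exact hq (hv q (Finsupp.mem_support_iff.2 fun h => hne h.symm))
    -- the partial map as a bundled hom on B
    let fB : ↥B →+ H := AddMonoidHom.mk' (fun x => f0 x) (by
      intro x y
      exact huniq _ _ _ (hf0 _ (add_mem x.2 y.2)) (add_mem (hf0 _ x.2) (hf0 _ y.2)))
    have hsupp_f0 : ∀ x : A, x ∈ B → ∀ q ∈ (f0 x).support, P q := by
      intro x hx q hq
      obtain ⟨h', hh'⟩ := hGood.2.2 (x, f0 x) (hf0 x hx) q hq
      have hq1B : q.1 ∈ B := (hmemB q.1).2 ⟨h', hh'⟩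
      refine ⟨hBB' hq1B, fun hqa => ha ?_⟩
      have : q.1 = a := congrArg Prod.fst hqa
      rwa [this] at hq1B
    -- extend over B'
    obtain ⟨ψ, hψ⟩ := (baer_finsupp (Subtype P)).extension_property_addMonoidHom
      (AddSubgroup.inclusion hBB') (AddSubgroup.inclusion_injective hBB') (σ.comp fB)
    let ψ' : ↥B' →+ H := (e.comp ψ) + ((Finsupp.singleAddHom (a, 0)).comp χ)
    have hψ'apply : ∀ x : ↥B', ψ' x = e (ψ x) + Finsupp.single (a, 0) (χ0 x) := fun x => rfl
    have hψ'B : ∀ x : ↥B, ψ' (AddSubgroup.inclusion hBB' x) = f0 x := by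
      intro x
      have h1 : ψ (AddSubgroup.inclusion hBB' x) = σ (fB x) := by
        rw [show ψ (AddSubgroup.inclusion hBB' x)
            = (ψ.comp (AddSubgroup.inclusion hBB')) x from rfl, hψ]
        rfl
      have h2 : χ0 (AddSubgroup.inclusion hBB' x) = 0 := hχB _ x.2
      rw [hψ'apply, h1, h2, Finsupp.single_zero, add_zero]
      exact hes _ (hsupp_f0 _ x.2)
    have hval : ∀ x : ↥B', (ψ' x) (a, 0) = χ0 x := by
      intro x
      rw [hψ'apply, Finsupp.add_apply, Finsupp.single_eq_same,
        show e (ψ x) = Finsupp.embDomain (Function.Embedding.subtype P) (ψ x) from rfl,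
        Finsupp.embDomain_notin_range _ _ _ hPnotin, zero_add]
    have hψ'mem : ∀ x : ↥B', ψ' x = 0 → (x : A) ∈ B := by
      intro x hx
      refine hχmem x ?_
      rw [← hval x, hx]
      rfl
    -- the extended graph
    let Γ' : AddSubgroup (A × H) := ((B'.subtype).prod ψ').range
    have hmemΓ' : ∀ p : A × H, p ∈ Γ' ↔ ∃ x : ↥B', ((x : A), ψ' x) = p := fun p => Iff.rfl
    have hΓsub : Γ ≤ Γ' := by
      rintro ⟨x, h⟩ hp
      have hxB : x ∈ B := (hmemB x).2 ⟨h, hp⟩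
      have hhf : h = f0 x := huniq x h (f0 x) hp (hf0 x hxB)
      refine (hmemΓ' _).2 ⟨AddSubgroup.inclusion hBB' ⟨x, hxB⟩, ?_⟩
      rw [hψ'B ⟨x, hxB⟩, hhf]
      rfl
    have hGood' : Good Γ' := by
      refine ⟨fun h hh => ?_, fun b hb => ?_, fun p hp q hq => ?_⟩
      · obtain ⟨x, hx⟩ := (hmemΓ' _).1 hh
        have hx1 : (x : A) = 0 := congrArg Prod.fst hx
        have hx0 : x = 0 := Subtype.ext hx1
        have hsnd : ψ' x = h := congrArg Prod.snd hx
        rw [← hsnd, hx0, map_zero]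
      · obtain ⟨x, hx⟩ := (hmemΓ' _).1 hb
        have hx2 : ψ' x = 0 := congrArg Prod.snd hx
        have hxB : (x : A) ∈ B := hψ'mem x hx2
        have hxeq : AddSubgroup.inclusion hBB' ⟨(x : A), hxB⟩ = x := Subtype.ext rfl
        have hf0x : f0 (x : A) = 0 := by
          rw [← hψ'B ⟨(x : A), hxB⟩, hxeq]
          exact hx2
        have hmem0 : ((x : A), (0 : H)) ∈ Γ := by
          have := hf0 _ hxB
          rwa [hf0x] at this
        have hz := hGood.2.1 _ hmem0
        have hfst : (x : A) = b := congrArg Prod.fst hx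
        rw [← hfst]
        exact hz
      · obtain ⟨x, hx⟩ := (hmemΓ' _).1 hp
        have hq' : q ∈ (ψ' x).support := by
          rw [show p.2 = ψ' x from (congrArg Prod.snd hx).symm] at hq
          exact hq
        have hsupp : (ψ' x).support ⊆
            (Finsupp.embDomain (Function.Embedding.subtype P) (ψ x)).support ∪
            (Finsupp.single ((a, 0) : A × ℕ) (χ0 x)).support := by
          rw [hψ'apply]
          exact Finsupp.support_add
        have hq1B' : q.1 ∈ B' := by
          rcases Finset.mem_union.1 (hsupp hq') with h1 | h1
          · rw [Finsupp.support_embDomain] at h1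
            obtain ⟨⟨q', hq'P⟩, -, rfl⟩ := Finset.mem_map.1 h1
            exact hq'P.1
          · have := Finsupp.support_single_subset h1
            rw [Finset.mem_singleton] at this
            rw [this]
            exact haB'
        exact ⟨ψ' ⟨q.1, hq1B'⟩, (hmemΓ' _).2 ⟨⟨q.1, hq1B'⟩, rfl⟩⟩
    have hle : Γ' ≤ Γ := hmax.2 hGood' hΓsub
    have haΓ : (a, ψ' ⟨a, haB'⟩) ∈ Γ' := (hmemΓ' _).2 ⟨⟨a, haB'⟩, rfl⟩
    exact ha ((hmemB a).2 ⟨_, hle haΓ⟩)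
  -- construct the embedding from the total graph
  have hex : ∀ x : A, ∃ h : H, (x, h) ∈ Γ := fun x => (hmemB x).1 (hclaim x)
  have hf0' : ∀ x : A, (x, f0 x) ∈ Γ := fun x => hf0 x (hclaim x)
  have hadd : ∀ x y : A, f0 (x + y) = f0 x + f0 y := by
    intro x y
    exact huniq _ _ _ (hf0' (x + y)) (add_mem (hf0' x) (hf0' y))
  refine ⟨AddMonoidHom.mk' f0 hadd, fun x y hxy => ?_⟩
  have : (x - y, f0 x - f0 y) ∈ Γ := by
    have := sub_mem (hf0' x) (hf0' y)
    simpa using this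
  have hxy' : f0 x = f0 y := hxy
  rw [show f0 x - f0 y = 0 by rw [hxy']; simp] at this
  have := hGood.2.1 _ this
  exact sub_eq_zero.1 this


section Groth
variable {G : Type*} [AddCommSemigroup G]

private def grSetoid (hc : ∀ a b c : G, a + c = b + c → a = b) : Setoid (G × G) where
  r p q := p.1 + q.2 = q.1 + p.2
  iseqv := by
    refine ⟨fun p => rfl, fun h => h.symm, ?_⟩
    intro p q r h1 h2
    refine hc _ _ (q.2 + q.1) ?_
    calc (p.1 + r.2) + (q.2 + q.1) = (p.1 + q.2) + (r.2 + q.1) := add_add_add_comm _ _ _ _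
      _ = (q.1 + p.2) + (r.2 + q.1) := by rw [h1]
      _ = (q.1 + r.2) + (p.2 + q.1) := by simp [add_assoc, add_comm, add_left_comm]
      _ = (r.1 + q.2) + (p.2 + q.1) := by rw [h2]
      _ = (r.1 + p.2) + (q.2 + q.1) := by simp [add_assoc, add_comm, add_left_comm]

def Groth (hc : ∀ a b c : G, a + c = b + c → a = b) : Type _ := Quotient (grSetoid hc)

variable (hc : ∀ a b c : G, a + c = b + c → a = b) (g₀ : G)

private def grothAdd : Groth hc → Groth hc → Groth hc :=
  Quotient.map₂ (fun p q => (p.1 + q.1, p.2 + q.2)) (by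
    rintro ⟨a1, a2⟩ ⟨a1', a2'⟩ h1 ⟨b1, b2⟩ ⟨b1', b2'⟩ h2
    have h1' : a1 + a2' = a1' + a2 := h1
    have h2' : b1 + b2' = b1' + b2 := h2
    show (a1 + b1) + (a2' + b2') = (a1' + b1') + (a2 + b2)
    calc (a1 + b1) + (a2' + b2') = (a1 + a2') + (b1 + b2') := add_add_add_comm _ _ _ _
      _ = (a1' + a2) + (b1' + b2) := by rw [h1', h2']
      _ = (a1' + b1') + (a2 + b2) := add_add_add_comm _ _ _ _)

private def grothNeg : Groth hc → Groth hc :=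
  Quotient.map (fun p => (p.2, p.1)) (by
    rintro ⟨a1, a2⟩ ⟨b1, b2⟩ h
    have h' : a1 + b2 = b1 + a2 := h
    show a2 + b1 = b2 + a1
    rw [add_comm, ← h', add_comm])

def grothGroup : AddCommGroup (Groth hc) :=
  letI : Add (Groth hc) := ⟨grothAdd hc⟩
  letI : Zero (Groth hc) := ⟨Quotient.mk _ (g₀, g₀)⟩
  letI : Neg (Groth hc) := ⟨grothNeg hc⟩
  { add := (· + ·)
    zero := 0
    neg := Neg.neg
    nsmul := nsmulRec
    zsmul := zsmulRec
    add_assoc := by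
      rintro ⟨⟨a1, a2⟩⟩ ⟨⟨b1, b2⟩⟩ ⟨⟨c1, c2⟩⟩
      refine Quotient.sound ?_
      show ((a1 + b1) + c1) + (a2 + (b2 + c2)) = (a1 + (b1 + c1)) + ((a2 + b2) + c2)
      simp [add_assoc, add_comm, add_left_comm]
    zero_add := by
      rintro ⟨⟨a1, a2⟩⟩
      refine Quotient.sound ?_
      show (g₀ + a1) + a2 = a1 + (g₀ + a2)
      simp [add_assoc, add_comm, add_left_comm]
    add_zero := by
      rintro ⟨⟨a1, a2⟩⟩
      refine Quotient.sound ?_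
      show (a1 + g₀) + a2 = a1 + (a2 + g₀)
      simp [add_assoc, add_comm, add_left_comm]
    add_comm := by
      rintro ⟨⟨a1, a2⟩⟩ ⟨⟨b1, b2⟩⟩
      refine Quotient.sound ?_
      show (a1 + b1) + (b2 + a2) = (b1 + a1) + (a2 + b2)
      simp [add_assoc, add_comm, add_left_comm]
    neg_add_cancel := by
      rintro ⟨⟨a1, a2⟩⟩
      refine Quotient.sound ?_
      show (a2 + a1) + g₀ = g₀ + (a1 + a2)
      simp [add_assoc, add_comm, add_left_comm] }

def grothEmb (g : G) : Groth hc := Quotient.mk _ (g + g, g)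

lemma grothEmb_add (a b : G) :
    grothEmb hc (a + b) = grothAdd hc (grothEmb hc a) (grothEmb hc b) := by
  refine (Quotient.sound ?_).symm
  show ((a + a) + (b + b)) + (a + b) = ((a + b) + (a + b)) + (a + b)
  simp [add_assoc, add_comm, add_left_comm]

lemma grothEmb_injective : Function.Injective (grothEmb hc) := by
  intro a b h
  have h' : (a + a) + b = (b + b) + a := Quotient.exact h
  refine hc _ _ (a + b) ?_
  calc a + (a + b) = (a + a) + b := by rw [add_assoc]
    _ = (b + b) + a := h'
    _ = b + (a + b) := by rw [add_assoc, add_comm b a]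
end Groth
noncomputable def colour {ι : Type*} (v : ι →₀ Dd) : ℕ :=
  (Nat.unpair (Nat.log 2 v.support.card)).1

theorem colour_works {ι : Type*} (Y : Set (ι →₀ Dd)) (hY : ¬ Y.Countable) (k : ℕ) :
    ∃ h ∈ FS Y, colour h = k := by
  classical
  -- the set of supports is uncountable
  have h𝒜 : ¬ (Finsupp.support '' Y).Countable := by
    refine uncount_image hY _ (fun S => ?_)
    have hinj : Function.Injective (fun v : ↥(Y ∩ Finsupp.support ⁻¹' {S}) =>
        (fun i : ↥(S : Finset ι) => (v : ι →₀ Dd) (i : ι))) := by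
      rintro ⟨v, hv⟩ ⟨u, hu⟩ h
      have hvS : v.support = S := hv.2
      have huS : u.support = S := hu.2
      refine Subtype.ext (Finsupp.ext fun i => ?_)
      by_cases hi : i ∈ S
      · exact congrFun h ⟨i, by simpa using hi⟩
      · rw [Finsupp.notMem_support_iff.1 (by rw [hvS]; exact hi),
          Finsupp.notMem_support_iff.1 (by rw [huS]; exact hi)]
    exact Set.countable_coe_iff.1 (hinj.countable)
  obtain ⟨R, ℬ, hsub, hunc, hpair⟩ := delta_system _ h𝒜
  -- pick representatives
  have hpickex : ∀ S ∈ ℬ, ∃ v ∈ Y, v.support = S := fun S hS => by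
    obtain ⟨v, hv, rfl⟩ := hsub hS
    exact ⟨v, hv, rfl⟩
  let pick : Finset ι → (ι →₀ Dd) := fun S =>
    if h : ∃ v ∈ Y, v.support = S then Classical.choose h else 0
  have hpick : ∀ S ∈ ℬ, pick S ∈ Y ∧ (pick S).support = S := by
    intro S hS
    have h := hpickex S hS
    simpa only [pick, dif_pos h] using Classical.choose_spec h
  -- refine: constant restriction to R and constant cardinality
  obtain ⟨⟨r0, c0⟩, hfib⟩ := uncount_fiber hunc
    (fun S => ((fun i : ↥(R : Finset ι) => pick S (i : ι)), S.card) :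
      Finset ι → (↥(R : Finset ι) → Dd) × ℕ)
  set ℬ₁ : Set (Finset ι) := ℬ ∩ _ ⁻¹' {(r0, c0)} with hℬ₁
  have hℬ₂unc : ¬ (ℬ₁ \ {R}).Countable := by
    intro h
    exact hfib ((h.union (Set.countable_singleton R)).mono
      (fun S hS => if hSR : S = R then Or.inr hSR else Or.inl ⟨hS, hSR⟩))
  have hinf : (ℬ₁ \ {R}).Infinite := fun hfin => hℬ₂unc hfin.countable
  let emb := hinf.natEmbedding
  let Sq : ℕ → Finset ι := fun m => (emb m : Finset ι)
  have hSinj : Function.Injective Sq := fun m m' h => emb.injective (Subtype.ext h)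
  have hSq : ∀ m, Sq m ∈ ℬ₁ \ {R} := fun m => (emb m).2
  have hSℬ : ∀ m, Sq m ∈ ℬ := fun m => (hSq m).1.1
  have hSr0 : ∀ m, (fun i : ↥(R : Finset ι) => pick (Sq m) (i : ι)) = r0 := by
    intro m
    have := (hSq m).1.2
    simp only [Set.mem_preimage, Set.mem_singleton_iff, Prod.mk.injEq] at this
    exact this.1
  have hSc0 : ∀ m, (Sq m).card = c0 := by
    intro m
    have := (hSq m).1.2
    simp only [Set.mem_preimage, Set.mem_singleton_iff, Prod.mk.injEq] at this
    exact this.2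
  have hSR : ∀ m, Sq m ≠ R := fun m => (hSq m).2
  have hRint : ∀ m m', m ≠ m' → Sq m ∩ Sq m' = R := fun m m' h =>
    hpair _ (hSℬ m) _ (hSℬ m') (fun he => h (hSinj he))
  have hRsub : ∀ m, R ⊆ Sq m := by
    intro m
    rw [← hRint m (m+1) (by omega)]
    exact Finset.inter_subset_left
  -- the sequence of elements
  let y : ℕ → (ι →₀ Dd) := fun m => pick (Sq m)
  have hyY : ∀ m, y m ∈ Y := fun m => (hpick _ (hSℬ m)).1
  have hysupp : ∀ m, (y m).support = Sq m := fun m => (hpick _ (hSℬ m)).2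
  have hyinj : Function.Injective y := by
    intro m m' h
    exact hSinj (by rw [← hysupp m, ← hysupp m', h])
  -- the root and petals
  let r : ι →₀ Dd := (y 0).filter (· ∈ R)
  let w : ℕ → (ι →₀ Dd) := fun m => (y m).filter (fun i => ¬ i ∈ R)
  have hyval : ∀ (m : ℕ) (i : ↥(R : Finset ι)), y m (i : ι) = r0 i := by
    intro m i
    exact congrFun (hSr0 m) i
  have hdecomp : ∀ m, y m = r + w m := by
    intro m
    refine Finsupp.ext fun i => ?_
    rw [Finsupp.add_apply, Finsupp.filter_apply, Finsupp.filter_apply]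
    by_cases hi : i ∈ R
    · rw [if_pos hi, if_neg (by simpa using hi), add_zero,
        hyval m ⟨i, by simpa using hi⟩, hyval 0 ⟨i, by simpa using hi⟩]
    · rw [if_neg hi, if_pos hi, zero_add]
  have hsuppw : ∀ m, (w m).support = Sq m \ R := by
    intro m
    rw [show (w m).support = ((y m).filter (fun i => ¬ i ∈ R)).support from rfl,
      Finsupp.support_filter, hysupp m]
    ext i
    simp [Finset.mem_sdiff, Finset.mem_filter]
  have hsuppr : r.support ⊆ R := by
    rw [show r.support = ((y 0).filter (· ∈ R)).support from rfl, Finsupp.support_filter]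
    intro i hi
    exact (Finset.mem_filter.1 hi).2
  -- sizes
  set s : ℕ := c0 - R.card with hs
  have hscard : ∀ m, (Sq m \ R).card = s := by
    intro m
    rw [Finset.card_sdiff_of_subset (hRsub m), hSc0]
  have hslb : 1 ≤ s := by
    have h1 : R.card < c0 := by
      rw [← hSc0 0]
      exact Finset.card_lt_card (lt_of_le_of_ne (hRsub 0) (Ne.symm (hSR 0)))
    omega
  -- choose the dyadic block
  set j : ℕ := Nat.pair k (s + R.card + 1) with hj
  have hjk : (Nat.unpair j).1 = k := by rw [hj, Nat.unpair_pair]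
  have hjlarge : s + R.card < 2 ^ j := by
    have h1 : s + R.card + 1 ≤ j := Nat.right_le_pair _ _
    have h2 : j < 2 ^ j := Nat.lt_two_pow_self
    omega
  set N : ℕ := 2 ^ j / s with hN
  -- the sum of (N+1) many elements of the sequence
  let x : Fin (N + 1) → (ι →₀ Dd) := fun i => y i
  have hxinj : Function.Injective x := fun i i' h =>
    Fin.val_injective (hyinj h)
  refine ⟨sgSum N x, ⟨N, x, hxinj, fun i => hyY i, rfl⟩, ?_⟩
  -- compute the sum
  have hsum : sgSum N x = (N + 1) • r + ∑ i : Fin (N + 1), w i := by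
    rw [sgSum_eq_sum]
    calc ∑ i : Fin (N+1), x i = ∑ i : Fin (N+1), (r + w i) := by
          refine Finset.sum_congr rfl fun i _ => ?_
          exact hdecomp i
      _ = (∑ _i : Fin (N+1), r) + ∑ i : Fin (N+1), w i := Finset.sum_add_distrib
      _ = (N + 1) • r + ∑ i : Fin (N+1), w i := by
          rw [Finset.sum_const, Finset.card_univ, Fintype.card_fin]
  -- support cardinality
  have hwdisj : ∀ (i i' : Fin (N+1)), i ≠ i' → Disjoint (w i).support (w i').support := by
    intro i i' h
    rw [hsuppw, hsuppw, Finset.disjoint_left]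
    intro x hx hx'
    have hmem : (x : ι) ∈ Sq i ∩ Sq i' := Finset.mem_inter.2
      ⟨(Finset.mem_sdiff.1 hx).1, (Finset.mem_sdiff.1 hx').1⟩
    rw [hRint i i' (fun he => h (Fin.val_injective he))] at hmem
    exact (Finset.mem_sdiff.1 hx).2 hmem
  have hsuppsum : (∑ i : Fin (N+1), w i).support
      = Finset.univ.biUnion (fun i : Fin (N+1) => (w i).support) := by
    rw [Finsupp.support_sum_eq_biUnion]
    intro i i' h
    exact hwdisj i i' h
  have hcardsum : (∑ i : Fin (N+1), w i).support.card = (N + 1) * s := by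
    rw [hsuppsum, Finset.card_biUnion (fun i _ i' _ h => hwdisj i i' h)]
    simp only [hsuppw, hscard]
    rw [Finset.sum_const, Finset.card_univ, Fintype.card_fin, smul_eq_mul]
  have hsupprN : ((N + 1) • r).support ⊆ R := by
    intro i hi
    rw [Finsupp.mem_support_iff] at hi
    refine hsuppr (Finsupp.mem_support_iff.2 fun h0 => hi ?_)
    rw [show ((N + 1) • r) i = (N + 1) • (r i) from
      map_nsmul (Finsupp.applyAddHom i) _ _, h0, smul_zero]
  have hdisjrw : Disjoint ((N + 1) • r).support (∑ i : Fin (N+1), w i).support := by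
    rw [hsuppsum, Finset.disjoint_biUnion_right]
    intro i _
    rw [hsuppw, Finset.disjoint_left]
    intro x hx hx'
    exact (Finset.mem_sdiff.1 hx').2 (hsupprN hx)
  have hcard : (sgSum N x).support.card = ((N + 1) • r).support.card + (N + 1) * s := by
    rw [hsum, Finsupp.support_add_eq hdisjrw, Finset.card_union_of_disjoint hdisjrw, hcardsum]
  -- the cardinality lands in the dyadic block [2^j, 2^(j+1))
  have htle : ((N + 1) • r).support.card ≤ R.card := Finset.card_le_card hsupprN
  have hprod1 : 2 ^ j < (N + 1) * s := by
    refine (Nat.div_lt_iff_lt_mul (by omega)).1 ?_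
    rw [hN]
    exact Nat.lt_succ_self _
  have hprod2 : (N + 1) * s ≤ 2 ^ j + s := by
    have h1 : N * s ≤ 2 ^ j := by rw [hN]; exact Nat.div_mul_le_self _ _
    calc (N + 1) * s = N * s + s := by ring
      _ ≤ 2 ^ j + s := by omega
  have hlow : 2 ^ j ≤ (sgSum N x).support.card := by
    rw [hcard]
    exact le_trans hprod1.le (Nat.le_add_left _ _)
  have hhigh : (sgSum N x).support.card < 2 ^ (j + 1) := by
    rw [hcard]
    have hsumle : ((N + 1) • r).support.card + (N + 1) * s ≤ R.card + (2 ^ j + s) :=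
      Nat.add_le_add htle hprod2
    have h2 : R.card + (2 ^ j + s) < 2 ^ (j + 1) := by
      have h3 : 2 ^ (j + 1) = 2 ^ j + 2 ^ j := by ring
      omega
    exact lt_of_le_of_lt hsumle h2
  rw [show colour (sgSum N x) = (Nat.unpair (Nat.log 2 (sgSum N x).support.card)).1 from rfl,
    Nat.log_eq_of_pow_le_of_lt_pow hlow hhigh, hjk]


theorem stmt0 {G : Type*} [AddCommSemigroup G]
    (hcancel : ∀ a b c : G, a + c = b + c → a = b)
    (hG : ℵ₀ < Cardinal.mk G) :
    ∃ c : G → ℕ, ∀ X : Set G, ℵ₀ < Cardinal.mk X →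
      ∀ k : ℕ, ∃ g ∈ FS X, c g = k := by
  classical
  obtain ⟨g₀⟩ : Nonempty G :=
    Cardinal.mk_ne_zero_iff.1 (ne_of_gt (lt_trans Cardinal.aleph0_pos hG))
  letI : AddCommGroup (Groth hcancel) := grothGroup hcancel g₀
  obtain ⟨φ, hφ⟩ := exists_emb_finsupp (Groth hcancel)
  let ψ : G → ((Groth hcancel × ℕ) →₀ Dd) := fun g => φ (grothEmb hcancel g)
  have hψadd : ∀ a b : G, ψ (a + b) = ψ a + ψ b := by
    intro a b
    show φ (grothEmb hcancel (a + b)) = φ (grothEmb hcancel a) + φ (grothEmb hcancel b)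
    rw [grothEmb_add hcancel a b]
    exact map_add φ _ _
  have hψinj : Function.Injective ψ := fun a b h => grothEmb_injective hcancel (hφ h)
  refine ⟨fun g => colour (ψ g), ?_⟩
  intro X hX k
  have hXunc : ¬ X.Countable := uncount_not_countable.2 hX
  have hYunc : ¬ (ψ '' X).Countable := by
    intro hc
    exact hXunc ((hc.preimage hψinj).mono (Set.subset_preimage_image ψ X))
  obtain ⟨h, hFS, hcol⟩ := colour_works (ψ '' X) hYunc k
  obtain ⟨n, x, hxinj, hxmem, hxsum⟩ := hFS
  choose g hgX hgψ using fun i => hxmem i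
  have hginj : Function.Injective g := fun i j hij => hxinj (by rw [← hgψ i, ← hgψ j, hij])
  refine ⟨sgSum n g, ⟨n, g, hginj, hgX, rfl⟩, ?_⟩
  show colour (ψ (sgSum n g)) = k
  rw [map_sgSum ψ hψadd n g, show ψ ∘ g = x from funext hgψ, hxsum]
  exact hcol
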